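/- Let A and B be 2×2 real matrices and define Δ(u) = tr(A + u·B)² − 4·det(A + u·B) for u ∈ ℝ. Then there exists u ∈ ℝ with Δ(u) < 0 if and only if one of the following holds: (1) det([A,B]) < 0; or (2) det([A,B]) > 0 and tr(B)² − 4·det(B) < 0; or (3) det([A,B]) = 0 and either (a) tr(B)² − 4·det(B) = 0, tr(adj(A)·B) = tr(A·B), and tr(A)² − 4·det(A) < 0, or (b) tr(B)² − 4·det(B) < 0 or tr(A)² − 4·det(A) < 0. -/

import Mathlib

lemma aux_p_neg (p q r : ℝ) (hp : p < 0) : ∃ u : ℝ, p*u^2+q*u+r < 0 := by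
  refine ⟨(|q|+|r|+1)/(-p) + 1, ?_⟩
  have hp' : 0 < -p := by linarith
  have h1 : (-p) * ((|q|+|r|+1)/(-p)) = |q|+|r|+1 := by
    field_simp
    exact div_self (ne_of_lt hp)
  have hu0 : 0 ≤ (|q|+|r|+1)/(-p) := by positivity
  nlinarith [le_abs_self q, neg_abs_le q, le_abs_self r, neg_abs_le r,
    mul_nonneg hu0 (sub_nonneg.mpr (neg_abs_le q)), abs_nonneg q, abs_nonneg r,
    mul_nonneg hu0 (abs_nonneg r), mul_nonneg hu0 hu0]

lemma quad_neg_iff (p q r : ℝ) :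
    (∃ u : ℝ, p*u^2+q*u+r < 0) ↔ (0 < q^2-4*p*r ∨ p < 0 ∨ r < 0) := by
  constructor
  · rintro ⟨u, hu⟩
    by_contra hc
    push_neg at hc
    obtain ⟨h1, h2, h3⟩ := hc
    rcases eq_or_lt_of_le h2 with h2 | h2
    · rw [← h2] at hu h1
      nlinarith [sq_nonneg q, sq_nonneg u, mul_nonneg h3 h3]
    · nlinarith [sq_nonneg (2*p*u+q)]
  · rintro (h | h | h)
    · rcases lt_trichotomy p 0 with hp | hp | hp
      · exact aux_p_neg p q r hp
      · have hq : q ≠ 0 := by intro h0; rw [hp, h0] at h; nlinarith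
        refine ⟨-(r+1)/q, ?_⟩
        rw [hp]
        field_simp
        apply div_neg_of_neg_of_pos <;> nlinarith [lt_of_le_of_ne (sq_nonneg q) (Ne.symm (pow_ne_zero 2 hq))]
      · refine ⟨-q/(2*p), ?_⟩
        have : p*(-q/(2*p))^2+q*(-q/(2*p))+r = (4*p*r - q^2)/(4*p) := by
          field_simp; ring
        rw [this]
        apply div_neg_of_neg_of_pos <;> nlinarith
    · exact aux_p_neg p q r h
    · exact ⟨0, by nlinarith⟩

/-- There exists `u ∈ ℝ` with `Δ(u) = tr(A+uB)² − 4 det(A+uB) < 0` iff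
(1) `det[A,B] < 0`; or (2) `det[A,B] > 0` and `B` has non-real eigenvalues; or
(3) `det[A,B] = 0` and either (a) `B` has a unique real eigenvalue,
`tr(adj(A)B) = tr(AB)` and `A` has non-real eigenvalues, or (b) `B` or `A`
has non-real eigenvalues. -/
theorem exists_discriminant_neg_iff (A B : Matrix (Fin 2) (Fin 2) ℝ) :
    (∃ u : ℝ, (Matrix.trace (A + u • B)) ^ 2 - 4 * (A + u • B).det < 0) ↔
    ((A * B - B * A).det < 0 ∨
     (0 < (A * B - B * A).det ∧ (Matrix.trace B) ^ 2 - 4 * B.det < 0) ∨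
     ((A * B - B * A).det = 0 ∧
       (((Matrix.trace B) ^ 2 - 4 * B.det = 0 ∧
           Matrix.trace (A.adjugate * B) = Matrix.trace (A * B) ∧
           (Matrix.trace A) ^ 2 - 4 * A.det < 0) ∨
        ((Matrix.trace B) ^ 2 - 4 * B.det < 0 ∨
           (Matrix.trace A) ^ 2 - 4 * A.det < 0)))) := by
  set p := (Matrix.trace B)^2 - 4*B.det with hp
  set r := (Matrix.trace A)^2 - 4*A.det with hr
  set q := 2*(Matrix.trace (A*B) - Matrix.trace (A.adjugate*B)) with hq
  have key : ∀ u : ℝ, (Matrix.trace (A + u•B))^2 - 4*(A+u•B).det = p*u^2+q*u+r := by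
    intro u
    simp only [hp, hq, hr, Matrix.trace_fin_two, Matrix.det_fin_two,
      Matrix.adjugate_fin_two, Matrix.mul_apply, Matrix.add_apply, Matrix.smul_apply,
      Fin.sum_univ_two, smul_eq_mul, Matrix.of_apply, Matrix.cons_val', Matrix.cons_val_zero,
      Matrix.cons_val_one, Matrix.head_cons, Matrix.empty_val', Matrix.cons_val_fin_one,
      Matrix.head_fin_const]
    ring
  have hD : 16 * (A*B-B*A).det = 4*p*r - q^2 := by
    simp only [hp, hq, hr, Matrix.trace_fin_two, Matrix.det_fin_two,
      Matrix.adjugate_fin_two, Matrix.mul_apply, Matrix.sub_apply,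
      Fin.sum_univ_two, Matrix.of_apply, Matrix.cons_val', Matrix.cons_val_zero,
      Matrix.cons_val_one, Matrix.head_cons, Matrix.empty_val', Matrix.cons_val_fin_one,
      Matrix.head_fin_const]
    ring
  have hqe : (Matrix.trace (A.adjugate * B) = Matrix.trace (A * B)) ↔ q = 0 := by
    rw [hq]
    constructor <;> intro h <;> linarith
  have hlhs : (∃ u : ℝ, (Matrix.trace (A + u • B)) ^ 2 - 4 * (A + u • B).det < 0) ↔
      (0 < q^2-4*p*r ∨ p < 0 ∨ r < 0) := by
    rw [← quad_neg_iff p q r]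
    exact exists_congr fun u => by rw [key u]
  rw [hlhs, hqe]
  constructor
  · rintro (h | h | h)
    · left; linarith
    · rcases lt_trichotomy (q^2-4*p*r) 0 with h1 | h1 | h1
      · right; left; exact ⟨by linarith, h⟩
      · right; right; exact ⟨by linarith, Or.inr (Or.inl h)⟩
      · left; linarith
    · rcases lt_trichotomy (q^2-4*p*r) 0 with h1 | h1 | h1
      · have hpneg : p < 0 := by nlinarith [sq_nonneg q]
        right; left; exact ⟨by linarith, hpneg⟩
      · right; right; exact ⟨by linarith, Or.inr (Or.inr h)⟩
      · left; linarith
  · rintro (h | ⟨h1, h2⟩ | ⟨h1, h2⟩)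
    · left; linarith
    · right; left; exact h2
    · rcases h2 with ⟨_, _, h3⟩ | h3 | h3
      · right; right; exact h3
      · right; left; exact h3
      · right; right; exact h3
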